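/- Let H and K be complex Hilbert spaces with signature operators J ∈ L(H) and J_K ∈ L(K) (selfadjoint involutions). Let W ∈ L(H) satisfy (JW)* = JW, and let D ∈ L(K,H) be injective with W = DD^#, where D^# := J_K D* J. Let S be a closed subspace of H and assume W is S-complementable in the Krein sense: H = S + W⁻¹(J(S^⊥)). Set M := closure(D^#(S)) ⊆ K and M^{[⊥]} := J_K(M^⊥). Then: M ∩ M^{[⊥]} = {0}; range(D^#) ⊆ M + M^{[⊥]}; the map T sending x ∈ H to the M-component of D^#x in the decomposition M ∔ M^{[⊥]} is a bounded operator and satisfies T = D^#Q for any bounded idempotent Q with range(Q) = S and WQ = (JQ*J)W; consequently D∘(D^# − T) = W(I − Q), i.e., W_{/[S]} = D(I − P_{M // M^{[⊥]}})D^# where P_{M // M^{[⊥]}} is the projection onto M along M^{[⊥]} defined on M ∔ M^{[⊥]}. -/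

import Mathlib

open ContinuousLinearMap

noncomputable section

variable {H : Type*} [NormedAddCommGroup H] [InnerProductSpace ℂ H] [CompleteSpace H]

/-- The orthogonal projection onto a closed subspace `S`, as an endomorphism of `H`. -/
def projL (S : Submodule ℂ H) [Submodule.HasOrthogonalProjection S] : H →L[ℂ] H :=
  S.subtypeL.comp (Submodule.orthogonalProjectionOnto S)

/-- The corner `a = P_S B P_S` of the block decomposition of `B` w.r.t. `H = S ⊕ Sᗮ`. -/
def blockA (B : H →L[ℂ] H) (S : Submodule ℂ H) [Submodule.HasOrthogonalProjection S] : H →L[ℂ] H :=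
  projL S * B * projL S

/-- The corner `b = P_S B P_{Sᗮ}` of the block decomposition of `B` w.r.t. `H = S ⊕ Sᗮ`. -/
def blockB (B : H →L[ℂ] H) (S : Submodule ℂ H) [Submodule.HasOrthogonalProjection S] : H →L[ℂ] H :=
  projL S * B * (1 - projL S)

/-- The corner `c = P_{Sᗮ} B P_{Sᗮ}` of the block decomposition of `B` w.r.t. `H = S ⊕ Sᗮ`. -/
def blockC (B : H →L[ℂ] H) (S : Submodule ℂ H) [Submodule.HasOrthogonalProjection S] : H →L[ℂ] H :=
  (1 - projL S) * B * (1 - projL S)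

/-- `m = |a|^{1/2}`: `m` is the (unique) positive fourth root of `a⋆ a`. -/
def IsSqrtAbs (a m : H →L[ℂ] H) : Prop :=
  m.IsPositive ∧ m ^ 4 = adjoint a * a

/-- `B` is `S`-weakly complementable: `range b ⊆ range |a|^{1/2}`. -/
def IsWeaklyComplementable (B : H →L[ℂ] H) (S : Submodule ℂ H)
    [Submodule.HasOrthogonalProjection S] : Prop :=
  ∃ m : H →L[ℂ] H, IsSqrtAbs (blockA B S) m ∧
    LinearMap.range (blockB B S : H →ₗ[ℂ] H) ≤ LinearMap.range (m : H →ₗ[ℂ] H)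

/-- `B` is `S`-complementable: `H = S + B⁻¹(Sᗮ)`. -/
def IsComplementable (B : H →L[ℂ] H) (S : Submodule ℂ H) : Prop :=
  S ⊔ Sᗮ.comap (B : H →ₗ[ℂ] H) = ⊤

/-- The set `P(B,S)` of `B`-selfadjoint bounded idempotents onto `S`. -/
def projSet (B : H →L[ℂ] H) (S : Submodule ℂ H) : Set (H →L[ℂ] H) :=
  {Q | Q * Q = Q ∧ LinearMap.range (Q : H →ₗ[ℂ] H) = S ∧ B * Q = adjoint Q * B}

/-- `Y` is the Schur complement `B_{/S} = [[0,0],[0, c - f⋆ u f]]`, where `f` is the reduced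
solution of `b = |a|^{1/2} x` and `a = u |a|` is the polar decomposition of `a`. -/
def IsSchur (B : H →L[ℂ] H) (S : Submodule ℂ H) [Submodule.HasOrthogonalProjection S]
    (Y : H →L[ℂ] H) : Prop :=
  ∃ m u f : H →L[ℂ] H,
    IsSqrtAbs (blockA B S) m ∧
    LinearMap.ker (u : H →ₗ[ℂ] H) = LinearMap.ker (blockA B S : H →ₗ[ℂ] H) ∧
    (∀ x ∈ (LinearMap.ker (blockA B S : H →ₗ[ℂ] H))ᗮ, ‖u x‖ = ‖x‖) ∧
    blockA B S = u * m ^ 2 ∧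
    m * f = blockB B S ∧
    LinearMap.range (f : H →ₗ[ℂ] H) ≤ (LinearMap.range (m : H →ₗ[ℂ] H)).topologicalClosure ∧
    Y = blockC B S - adjoint f * (u * f)

/-- The set `M⁻(B,T)`. -/
def Mminus (B : H →L[ℂ] H) (T : Submodule ℂ H) : Set (H →L[ℂ] H) :=
  {X | IsSelfAdjoint X ∧ (B - X).IsPositive ∧ LinearMap.range (X : H →ₗ[ℂ] H) ≤ T}

/-- The set `M⁺(B,T)`. -/
def Mplus (B : H →L[ℂ] H) (T : Submodule ℂ H) : Set (H →L[ℂ] H) :=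
  {X | IsSelfAdjoint X ∧ (X - B).IsPositive ∧ LinearMap.range (X : H →ₗ[ℂ] H) ≤ T}

/-- `Y` is the Loewner maximum of `M`. -/
def IsMaxOf (M : Set (H →L[ℂ] H)) (Y : H →L[ℂ] H) : Prop :=
  Y ∈ M ∧ ∀ X ∈ M, (Y - X).IsPositive

/-- `Z` is the Loewner minimum of `M`. -/
def IsMinOf (M : Set (H →L[ℂ] H)) (Z : H →L[ℂ] H) : Prop :=
  Z ∈ M ∧ ∀ X ∈ M, (X - Z).IsPositive

/-- `Z` is the greatest lower bound of `M` in the Loewner order on selfadjoint operators. -/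
def IsGLBOf (M : Set (H →L[ℂ] H)) (Z : H →L[ℂ] H) : Prop :=
  IsSelfAdjoint Z ∧ (∀ X ∈ M, (X - Z).IsPositive) ∧
    ∀ F : H →L[ℂ] H, IsSelfAdjoint F → (∀ X ∈ M, (X - F).IsPositive) → (Z - F).IsPositive

/-- `Y` is the least upper bound of `M` in the Loewner order on selfadjoint operators. -/
def IsLUBOf (M : Set (H →L[ℂ] H)) (Y : H →L[ℂ] H) : Prop :=
  IsSelfAdjoint Y ∧ (∀ X ∈ M, (Y - X).IsPositive) ∧
    ∀ F : H →L[ℂ] H, IsSelfAdjoint F → (∀ X ∈ M, (F - X).IsPositive) → (F - Y).IsPositive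

/-- A decomposition `S = S₊ ⊕_B S₋` into a `B`-nonnegative and a `B`-nonpositive part. -/
def IsWDecomp (B : H →L[ℂ] H) (S Sp Sm : Submodule ℂ H) : Prop :=
  (∀ x ∈ Sp, ∀ y ∈ Sm, (inner ℂ x y : ℂ) = 0) ∧
  Sp ⊔ Sm = S ∧
  (∀ x ∈ Sp, 0 ≤ (inner ℂ (B x) x : ℂ).re) ∧
  (∀ x ∈ Sm, (inner ℂ (B x) x : ℂ).re ≤ 0) ∧
  (∀ x ∈ Sp, ∀ y ∈ Sm, (inner ℂ (B x) y : ℂ) = 0)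

/-- `Y` is Krein's shorted operator `B_{/T}` of the positive operator `B` to `T`:
the Loewner maximum of `{X : 0 ≤ X ≤ B, range X ⊆ Tᗮ}`. -/
def IsShort (B : H →L[ℂ] H) (T : Submodule ℂ H) (Y : H →L[ℂ] H) : Prop :=
  (Y.IsPositive ∧ (B - Y).IsPositive ∧ LinearMap.range (Y : H →ₗ[ℂ] H) ≤ Tᗮ) ∧
    ∀ X : H →L[ℂ] H, X.IsPositive → (B - X).IsPositive → LinearMap.range (X : H →ₗ[ℂ] H) ≤ Tᗮ →
      (Y - X).IsPositive

/-- The set `{R⋆ Q⋆ B Q R : Q² = Q, N(Q) = T}`. -/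
def comprSet2 (B R : H →L[ℂ] H) (T : Submodule ℂ H) : Set (H →L[ℂ] H) :=
  {X | ∃ Q : H →L[ℂ] H, Q * Q = Q ∧ LinearMap.ker (Q : H →ₗ[ℂ] H) = T ∧
    X = adjoint R * (adjoint Q * B * Q) * R}

/-- The set `{Q⋆ B Q : Q² = Q, N(Q) = S}`. -/
def comprSet1 (B : H →L[ℂ] H) (S : Submodule ℂ H) : Set (H →L[ℂ] H) :=
  {X | ∃ Q : H →L[ℂ] H, Q * Q = Q ∧ LinearMap.ker (Q : H →ₗ[ℂ] H) = S ∧ X = adjoint Q * B * Q}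

/-- The set `N⁻(W,T)` of the Krein space `(H, [x,y] = ⟨Jx,y⟩)`. -/
def Nminus (J W : H →L[ℂ] H) (T : Submodule ℂ H) : Set (H →L[ℂ] H) :=
  {X | IsSelfAdjoint (J * X) ∧ (J * (W - X)).IsPositive ∧ LinearMap.range (X : H →ₗ[ℂ] H) ≤ T}

/-- The set `N⁺(W,T)` of the Krein space `(H, [x,y] = ⟨Jx,y⟩)`. -/
def Nplus (J W : H →L[ℂ] H) (T : Submodule ℂ H) : Set (H →L[ℂ] H) :=
  {X | IsSelfAdjoint (J * X) ∧ (J * (X - W)).IsPositive ∧ LinearMap.range (X : H →ₗ[ℂ] H) ≤ T}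

/-- `Y` is the maximum of `M` in the Krein order induced by `J`. -/
def KMaxOf (J : H →L[ℂ] H) (M : Set (H →L[ℂ] H)) (Y : H →L[ℂ] H) : Prop :=
  Y ∈ M ∧ ∀ X ∈ M, (J * (Y - X)).IsPositive

/-- `Z` is the minimum of `M` in the Krein order induced by `J`. -/
def KMinOf (J : H →L[ℂ] H) (M : Set (H →L[ℂ] H)) (Z : H →L[ℂ] H) : Prop :=
  Z ∈ M ∧ ∀ X ∈ M, (J * (X - Z)).IsPositive

/-- `E` is a densely defined projection (idempotent) with kernel `N`. -/
def IsDDProj (N : Submodule ℂ H) (E : H →ₗ.[ℂ] H) : Prop :=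
  Dense (E.domain : Set H) ∧
  (∃ h : ∀ x : E.domain, E x ∈ E.domain, ∀ x : E.domain, E ⟨E x, h x⟩ = E x) ∧
  (LinearMap.ker E.toFun).map E.domain.subtype = N

/-- `G` is the (everywhere defined, bounded) composition `E ∘ T`; in particular
`range T ⊆ dom E`. -/
def IsBddComp (E : H →ₗ.[ℂ] H) (T G : H →L[ℂ] H) : Prop :=
  ∃ h : ∀ x : H, T x ∈ E.domain, ∀ x : H, G x = E ⟨T x, h x⟩

/-- For a Krein space `S`-complementable `W = DD^#`: with `M = closure(D^#(S))`, one has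
`M ∩ M^{[⊥]} = 0`, `range D^# ⊆ M + M^{[⊥]}`, the `M`-component map `T` of `D^#` is bounded
with `T = D^#Q` for any projection `Q ∈ P(W,S)`, and
`W_{/[S]} = D(I - P_{M ∕∕ M^{[⊥]}})D^# = W(I - Q)`. -/
theorem stmt_19 {K : Type*} [NormedAddCommGroup K] [InnerProductSpace ℂ K] [CompleteSpace K]
    (J : H →L[ℂ] H) (JK : K →L[ℂ] K)
    (hJ : IsSelfAdjoint J) (hJ2 : J * J = 1)
    (hJK : IsSelfAdjoint JK) (hJK2 : JK * JK = 1)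
    (W : H →L[ℂ] H) (hW : IsSelfAdjoint (J * W))
    (D : K →L[ℂ] H) (hD : Function.Injective D)
    (Dsharp : H →L[ℂ] K) (hDs : Dsharp = JK ∘L ((adjoint D) ∘L J))
    (hWD : W = D ∘L Dsharp)
    (S : Submodule ℂ H) [CompleteSpace S]
    (hc : S ⊔ (Sᗮ.map (J : H →ₗ[ℂ] H)).comap (W : H →ₗ[ℂ] H) = ⊤)
    (M : Submodule ℂ K) (hM : M = (S.map (Dsharp : H →ₗ[ℂ] K)).topologicalClosure)
    (Mp : Submodule ℂ K) (hMp : Mp = Mᗮ.map (JK : K →ₗ[ℂ] K)) :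
    M ⊓ Mp = ⊥ ∧
    LinearMap.range (Dsharp : H →ₗ[ℂ] K) ≤ M ⊔ Mp ∧
    ∃ T : H →L[ℂ] K,
      (∀ x : H, T x ∈ M ∧ Dsharp x - T x ∈ Mp) ∧
      ∀ Q : H →L[ℂ] H, Q * Q = Q → LinearMap.range (Q : H →ₗ[ℂ] H) = S →
        W * Q = (J * adjoint Q * J) * W →
        T = Dsharp ∘L Q ∧ D ∘L (Dsharp - T) = W * (1 - Q) := by
  have hJ' : adjoint J = J := hJ
  have hJK' : adjoint JK = JK := hJK
  have hJ2' : ∀ a : H, J (J a) = a := fun a => by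
    have := DFunLike.congr_fun hJ2 a
    simpa [ContinuousLinearMap.mul_apply] using this
  have hJK2' : ∀ a : K, JK (JK a) = a := fun a => by
    have := DFunLike.congr_fun hJK2 a
    simpa [ContinuousLinearMap.mul_apply] using this
  -- key inner-product identity
  have key : ∀ (s : H) (u : K),
      (inner ℂ (Dsharp s) (JK u) : ℂ) = inner ℂ s (J (D u)) := by
    intro s u
    rw [hDs]
    simp only [ContinuousLinearMap.comp_apply]
    calc (inner ℂ (JK ((adjoint D) (J s))) (JK u) : ℂ)
        = inner ℂ ((adjoint D) (J s)) (adjoint JK (JK u)) := by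
          rw [ContinuousLinearMap.adjoint_inner_right]
      _ = inner ℂ ((adjoint D) (J s)) u := by rw [hJK', hJK2']
      _ = inner ℂ (J s) (D u) := by rw [ContinuousLinearMap.adjoint_inner_left]
      _ = inner ℂ s (adjoint J (D u)) := by rw [ContinuousLinearMap.adjoint_inner_right]
      _ = inner ℂ s (J (D u)) := by rw [hJ']
  -- orthogonal of M equals orthogonal of D^#(S)
  have hMorth : Mᗮ = (S.map (Dsharp : H →ₗ[ℂ] K))ᗮ := by
    rw [hM, ← Submodule.orthogonal_orthogonal_eq_closure]
    exact Submodule.triorthogonal_eq_orthogonal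
  -- membership in Mp
  have hMpJK : ∀ u : K, u ∈ Mp ↔ JK u ∈ Mᗮ := by
    intro u
    rw [hMp]
    constructor
    · rintro ⟨v, hv, rfl⟩
      rwa [show JK ((JK : K →ₗ[ℂ] K) v) = v from hJK2' v]
    · intro h
      exact ⟨JK u, h, hJK2' u⟩
  have hMpChar : ∀ u : K, u ∈ Mp ↔ J (D u) ∈ Sᗮ := by
    intro u
    rw [hMpJK, hMorth, Submodule.mem_orthogonal, Submodule.mem_orthogonal]
    constructor
    · intro h s hs
      have := h (Dsharp s) ⟨s, hs, rfl⟩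
      rwa [key] at this
    · rintro h _ ⟨s, hs, rfl⟩
      rw [show (Dsharp : H →ₗ[ℂ] K) s = Dsharp s from rfl, key]
      exact h s hs
  have hMpChar' : ∀ u : K, u ∈ Mp ↔ D u ∈ Sᗮ.map (J : H →ₗ[ℂ] H) := by
    intro u
    rw [hMpChar]
    constructor
    · intro h; exact ⟨J (D u), h, hJ2' _⟩
    · rintro ⟨v, hv, hvu⟩
      have : J (D u) = v := by rw [← hvu]; exact hJ2' v
      rwa [this]
  -- membership in M for images of S
  have hMmem : ∀ s : H, s ∈ S → Dsharp s ∈ M := by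
    intro s hs
    rw [hM]
    exact (S.map (Dsharp : H →ₗ[ℂ] K)).le_topologicalClosure ⟨s, hs, rfl⟩
  -- claim 2 : range D^# ≤ M ⊔ Mp
  have hrange : ∀ x : H, Dsharp x ∈ M ⊔ Mp := by
    intro x
    have hx : x ∈ S ⊔ (Sᗮ.map (J : H →ₗ[ℂ] H)).comap (W : H →ₗ[ℂ] H) := hc ▸ Submodule.mem_top
    rcases Submodule.mem_sup.mp hx with ⟨s, hs, z, hz, rfl⟩
    rw [map_add]
    refine Submodule.add_mem_sup (hMmem s hs) ?_
    rw [hMpChar']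
    have : D (Dsharp z) = W z := by rw [hWD]; rfl
    rw [this]
    exact hz
  -- claim 1 : M ⊓ Mp = ⊥
  have hinter : ∀ u : K, u ∈ M → u ∈ Mp → u = 0 := by
    intro u huM huMp
    -- JK u is orthogonal to M
    have h1 : ∀ m ∈ M, (inner ℂ m (JK u) : ℂ) = 0 :=
      fun m hm => (Submodule.mem_orthogonal _ _).mp ((hMpJK u).mp huMp) m hm
    -- JK u is orthogonal to Mp
    have h2 : ∀ w ∈ Mp, (inner ℂ w (JK u) : ℂ) = 0 := by
      intro w hw
      have hw' : ∀ m ∈ M, (inner ℂ m (JK w) : ℂ) = 0 :=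
        fun m hm => (Submodule.mem_orthogonal _ _).mp ((hMpJK w).mp hw) m hm
      have := hw' u huM
      have h3 : (inner ℂ (JK u) w : ℂ) = 0 := by
        rw [← hJK'] at this
        rwa [ContinuousLinearMap.adjoint_inner_right] at this
      rw [← inner_conj_symm, h3, map_zero]
    have h4 : ∀ x : H, (inner ℂ (Dsharp x) (JK u) : ℂ) = 0 := by
      intro x
      rcases Submodule.mem_sup.mp (hrange x) with ⟨m, hm, w, hw, hmw⟩
      rw [← hmw, inner_add_left, h1 m hm, h2 w hw, add_zero]
    have h5 : ∀ x : H, (inner ℂ x (J (D u)) : ℂ) = 0 := by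
      intro x
      rw [← key]
      exact h4 x
    have h6 : J (D u) = 0 := by
      have := h5 (J (D u))
      exact inner_self_eq_zero.mp this
    have h7 : D u = 0 := by
      have := congrArg J h6
      rwa [hJ2', map_zero] at this
    have : D u = D 0 := by rw [h7, map_zero]
    exact hD this
  -- uniqueness of decompositions
  have huniq : ∀ (x : H) (m₁ m₂ : K), m₁ ∈ M → m₂ ∈ M →
      Dsharp x - m₁ ∈ Mp → Dsharp x - m₂ ∈ Mp → m₁ = m₂ := by
    intro x m₁ m₂ hm₁ hm₂ hp₁ hp₂
    have hM' : m₁ - m₂ ∈ M := Submodule.sub_mem _ hm₁ hm₂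
    have hP' : m₁ - m₂ ∈ Mp := by
      have := Submodule.sub_mem _ hp₂ hp₁
      simpa using this
    have := hinter _ hM' hP'
    exact sub_eq_zero.mp this
  -- existence of decompositions
  have hex : ∀ x : H, ∃ m : K, m ∈ M ∧ Dsharp x - m ∈ Mp := by
    intro x
    rcases Submodule.mem_sup.mp (hrange x) with ⟨m, hm, w, hw, hmw⟩
    exact ⟨m, hm, by rw [← hmw]; simpa using hw⟩
  -- construct T as a linear map
  let Tf : H → K := fun x => (hex x).choose
  have hTf : ∀ x : H, Tf x ∈ M ∧ Dsharp x - Tf x ∈ Mp := fun x => (hex x).choose_spec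
  have hTadd : ∀ x y : H, Tf (x + y) = Tf x + Tf y := by
    intro x y
    refine huniq (x + y) _ _ (hTf (x+y)).1 (Submodule.add_mem _ (hTf x).1 (hTf y).1)
      (hTf (x+y)).2 ?_
    have : Dsharp (x + y) - (Tf x + Tf y)
        = (Dsharp x - Tf x) + (Dsharp y - Tf y) := by
      rw [map_add]; abel
    rw [this]
    exact Submodule.add_mem _ (hTf x).2 (hTf y).2
  have hTsmul : ∀ (c : ℂ) (x : H), Tf (c • x) = c • Tf x := by
    intro c x
    refine huniq (c • x) _ _ (hTf (c • x)).1 (Submodule.smul_mem _ c (hTf x).1)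
      (hTf (c • x)).2 ?_
    have : Dsharp (c • x) - c • Tf x = c • (Dsharp x - Tf x) := by
      rw [map_smul, smul_sub]
    rw [this]
    exact Submodule.smul_mem _ c (hTf x).2
  let T₀ : H →ₗ[ℂ] K :=
    { toFun := Tf
      map_add' := hTadd
      map_smul' := hTsmul }
  -- closed graph
  have hMclosed : IsClosed (M : Set K) := by
    rw [hM]; exact Submodule.isClosed_topologicalClosure _
  have hMpclosed : IsClosed (Mp : Set K) := by
    have : (Mp : Set K) = JK ⁻¹' (Mᗮ : Set K) := by
      ext u; exact hMpJK u
    rw [this]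
    exact (Submodule.isClosed_orthogonal M).preimage JK.continuous
  have hgraph : IsClosed (T₀.graph : Set (H × K)) := by
    have hset : (T₀.graph : Set (H × K))
        = {p : H × K | p.2 ∈ M ∧ Dsharp p.1 - p.2 ∈ Mp} := by
      ext ⟨x, y⟩
      simp only [SetLike.mem_coe, LinearMap.mem_graph_iff, Set.mem_setOf_eq]
      constructor
      · rintro rfl
        exact hTf x
      · rintro ⟨h1, h2⟩
        exact huniq x y (Tf x) h1 (hTf x).1 h2 (hTf x).2
    rw [hset]
    have c1 : IsClosed {p : H × K | p.2 ∈ M} :=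
      hMclosed.preimage continuous_snd
    have c2 : IsClosed {p : H × K | Dsharp p.1 - p.2 ∈ Mp} :=
      hMpclosed.preimage ((Dsharp.continuous.comp continuous_fst).sub continuous_snd)
    exact c1.inter c2
  let T : H →L[ℂ] K := ⟨T₀, T₀.continuous_of_isClosed_graph hgraph⟩
  have hTapp : ∀ x : H, T x = Tf x := fun _ => rfl
  refine ⟨?_, ?_, T, fun x => hTf x, ?_⟩
  · apply le_antisymm
    · rintro u ⟨h1, h2⟩
      exact hinter u h1 h2
    · exact bot_le
  · rintro _ ⟨x, rfl⟩
    exact hrange x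
  · intro Q hQ2 hQr hQW
    have hQ2' : ∀ x : H, Q (Q x) = Q x := fun x => by
      have := DFunLike.congr_fun hQ2 x
      simpa [ContinuousLinearMap.mul_apply] using this
    -- D^# Q x ∈ M
    have hm : ∀ x : H, Dsharp (Q x) ∈ M := by
      intro x
      exact hMmem (Q x) (hQr ▸ LinearMap.mem_range_self (Q : H →ₗ[ℂ] H) x)
    -- D^# (x - Q x) ∈ Mp
    have hQW' : ∀ z : H, W (Q z) = J ((adjoint Q) (J (W z))) := by
      intro z
      have := DFunLike.congr_fun hQW z
      simpa [ContinuousLinearMap.mul_apply] using this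
    have hp : ∀ x : H, Dsharp x - Dsharp (Q x) ∈ Mp := by
      intro x
      have hdiff : Dsharp x - Dsharp (Q x) = Dsharp (x - Q x) := by rw [map_sub]
      rw [hdiff, hMpChar]
      have hDW : D (Dsharp (x - Q x)) = W x - W (Q x) := by
        rw [hWD]; simp [ContinuousLinearMap.comp_apply, map_sub]
      rw [hDW]
      rw [Submodule.mem_orthogonal']
      intro s hs
      rcases (hQr ▸ hs : s ∈ LinearMap.range (Q : H →ₗ[ℂ] H)) with ⟨y, rfl⟩
      rw [show (Q : H →ₗ[ℂ] H) y = Q y from rfl]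
      rw [← ContinuousLinearMap.adjoint_inner_left]
      have hval : (adjoint Q) (J (W x - W (Q x))) = 0 := by
        rw [map_sub, map_sub]
        have e1 : J (W (Q x)) = (adjoint Q) (J (W x)) := by
          rw [hQW' x, hJ2']
        rw [e1]
        have e2 : (adjoint Q) ((adjoint Q) (J (W x))) = (adjoint Q) (J (W x)) := by
          have : adjoint Q ∘L adjoint Q = adjoint Q := by
            rw [← ContinuousLinearMap.adjoint_comp, ← ContinuousLinearMap.mul_def, hQ2]
          exact DFunLike.congr_fun this (J (W x))
        rw [e2, sub_self]
      rw [hval, inner_zero_left]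
    have hTQ : T = Dsharp ∘L Q := by
      ext x
      rw [ContinuousLinearMap.comp_apply, hTapp]
      exact huniq x (Tf x) (Dsharp (Q x)) (hTf x).1 (hm x) (hTf x).2 (hp x)
    refine ⟨hTQ, ?_⟩
    ext x
    rw [hTQ]
    simp only [ContinuousLinearMap.comp_apply, ContinuousLinearMap.sub_apply,
      ContinuousLinearMap.mul_apply, ContinuousLinearMap.one_apply, map_sub]
    have : D (Dsharp x) = W x := by rw [hWD]; rfl
    have h2 : D (Dsharp (Q x)) = W (Q x) := by rw [hWD]; rfl
    rw [this, h2]
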